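/- Let (V, q) be a metabolic quadratic space over F_2 of dimension 2n, i.e., q : V → F_2 is a quadratic form whose associated bilinear form is nondegenerate and V contains a Lagrangian subspace. For any Lagrangian subspace X of V, the number of Lagrangian subspaces Y of V with Y ∩ X = {0} equals 2^{n(n−1)/2}. -/

import Mathlib

namespace St5
open Matrix Module LinearMap

lemma z2 : ∀ a b : ZMod 2, a + b = 0 ↔ a = b := by decide

def pairsEquiv (n : ℕ) : {p : Fin n × Fin n // p.1 < p.2} ≃ (Σ j : Fin n, Fin j.val) where
  toFun p := ⟨p.1.2, ⟨p.1.1.val, p.2⟩⟩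
  invFun s := ⟨(⟨s.2.val, s.2.isLt.trans s.1.isLt⟩, s.1), s.2.isLt⟩
  left_inv := by rintro ⟨⟨⟨i,hi⟩,⟨j,hj⟩⟩,h⟩; rfl
  right_inv := by rintro ⟨⟨j,hj⟩,⟨i,hi⟩⟩; rfl

theorem card_pairs (n : ℕ) : Nat.card {p : Fin n × Fin n // p.1 < p.2} = n * (n-1) / 2 := by
  rw [Nat.card_eq_fintype_card, Fintype.card_congr (pairsEquiv n), Fintype.card_sigma]
  simp only [Fintype.card_fin]
  rw [Fin.sum_univ_eq_sum_range (fun i => i) n]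
  exact Finset.sum_range_id n

/-- matrices that are symmetric with zero diagonal ≃ functions on pairs -/
noncomputable def matEquiv (n : ℕ) :
    {M : Matrix (Fin n) (Fin n) (ZMod 2) // Mᵀ = M ∧ ∀ i, M i i = 0} ≃
      ({p : Fin n × Fin n // p.1 < p.2} → ZMod 2) where
  toFun M p := M.1 p.1.1 p.1.2
  invFun c := ⟨Matrix.of fun i j =>
      if h : i < j then c ⟨(i,j),h⟩ else if h : j < i then c ⟨(j,i),h⟩ else 0, by
    constructor
    · ext i j
      simp only [Matrix.transpose_apply, Matrix.of_apply]
      rcases lt_trichotomy i j with h | h | h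
      · rw [dif_neg (asymm h), dif_pos h, dif_pos h]
      · subst h; rfl
      · rw [dif_pos h, dif_neg (asymm h), dif_pos h]
    · intro i
      simp [Matrix.of_apply, lt_irrefl]⟩
  left_inv := by
    rintro ⟨M, hsym, hdiag⟩
    ext i j
    simp only [Matrix.of_apply]
    rcases lt_trichotomy i j with h | h | h
    · rw [dif_pos h]
    · subst h; rw [dif_neg (lt_irrefl i), dif_neg (lt_irrefl i)]; exact (hdiag i).symm
    · rw [dif_neg (asymm h), dif_pos h]
      have h2 := congrFun (congrFun hsym j) i
      rw [Matrix.transpose_apply] at h2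
      exact h2.symm
  right_inv := by
    intro c
    ext ⟨⟨i,j⟩,h⟩
    simp only [Matrix.of_apply, dif_pos h]

theorem card_mat (n : ℕ) :
    Nat.card {M : Matrix (Fin n) (Fin n) (ZMod 2) // Mᵀ = M ∧ ∀ i, M i i = 0} =
      2 ^ (n * (n-1) / 2) := by
  rw [Nat.card_congr (matEquiv n), Nat.card_fun, Nat.card_eq_fintype_card (α := ZMod 2)]
  rw [card_pairs]
  rfl

variable {W : Type} [AddCommGroup W] [Module (ZMod 2) W]

theorem bilin_diag_iff {n : ℕ} (b : Basis (Fin n) (ZMod 2) W)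
    (β : LinearMap.BilinForm (ZMod 2) W) :
    (∀ y, β y y = 0) ↔
      ((LinearMap.BilinForm.toMatrix b β)ᵀ = LinearMap.BilinForm.toMatrix b β ∧
        ∀ i, (LinearMap.BilinForm.toMatrix b β) i i = 0) := by
  constructor
  · intro h
    constructor
    · ext i j
      simp only [Matrix.transpose_apply, LinearMap.BilinForm.toMatrix_apply]
      have h2 : β (b i) (b j) + β (b j) (b i) = 0 := by
        have h1 := h (b i + b j)
        simp only [map_add, LinearMap.add_apply] at h1
        linear_combination h1 - h (b i) - h (b j)
      exact ((z2 _ _).1 h2).symm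
    · intro i
      simp only [LinearMap.BilinForm.toMatrix_apply]
      exact h (b i)
  · rintro ⟨hsym, hdiag⟩ y
    have hβ : β = Matrix.toBilin b (LinearMap.BilinForm.toMatrix b β) :=
      ((LinearMap.BilinForm.toMatrix b).symm_apply_apply β).symm
    rw [hβ, Matrix.toBilin_apply]
    set M := LinearMap.BilinForm.toMatrix b β with hM
    rw [← Finset.sum_product']
    apply Finset.sum_ninvolution (fun p => (p.2, p.1))
    · intro ⟨i, j⟩
      simp only
      by_cases hij : i = j
      · subst hij; simp [hdiag i]
      · have hji : M j i = M i j := by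
          conv_lhs => rw [← hsym]
          rw [Matrix.transpose_apply]
        rw [hji]
        have h2 : (2 : ZMod 2) = 0 := rfl
        ring_nf
        rw [h2, mul_zero]
    · intro ⟨i, j⟩ hf
      by_cases hij : i = j
      · subst hij; simp [hdiag i] at hf
      · simp only [ne_eq, Prod.mk.injEq]
        intro ⟨h1, _⟩
        exact hij h1.symm
    · intros; exact Finset.mem_product.2 ⟨Finset.mem_univ _, Finset.mem_univ _⟩
    · intro p; rfl

theorem card_bilin {n : ℕ} (b : Basis (Fin n) (ZMod 2) W) :
    Nat.card {β : LinearMap.BilinForm (ZMod 2) W // ∀ y, β y y = 0} =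
      2 ^ (n * (n-1) / 2) := by
  classical
  rw [← card_mat n]
  exact Nat.card_congr ((BilinForm.toMatrix b).toEquiv.subtypeEquiv
    (fun β => bilin_diag_iff b β))


end St5


set_option maxHeartbeats 1000000 in
/-- Let `(V, q)` be a metabolic quadratic space over `F_2` of dimension `2n`
(the polar bilinear form of `q` is nondegenerate and `V` has a Lagrangian subspace).  For any
Lagrangian subspace `X` of `V`, the number of Lagrangian subspaces `Y` with `Y ∩ X = 0`
equals `2 ^ (n (n - 1) / 2)`. -/
theorem statement5 (V : Type) [AddCommGroup V] [Module (ZMod 2) V]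
    [FiniteDimensional (ZMod 2) V] (n : ℕ)
    (hdim : Module.finrank (ZMod 2) V = 2 * n)
    (q : QuadraticForm (ZMod 2) V)
    (hnd : LinearMap.BilinForm.Nondegenerate q.polarBilin)
    (X : Submodule (ZMod 2) V)
    (hXq : ∀ x ∈ X, q x = 0)
    (hXlag : X = LinearMap.BilinForm.orthogonal q.polarBilin X) :
    Nat.card {Y : Submodule (ZMod 2) V //
        (∀ y ∈ Y, q y = 0) ∧ Y = LinearMap.BilinForm.orthogonal q.polarBilin Y ∧ Y ⊓ X = ⊥} =
      2 ^ (n * (n - 1) / 2) := by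
  classical
  open Module LinearMap in
  set B := q.polarBilin with hB
  have hcomm : ∀ x y : V, B x y = B y x := fun x y => QuadraticMap.polar_comm q x y
  have hrefl : B.IsRefl := fun x y h => by rw [hcomm]; exact h
  have hqadd : ∀ x y : V, q (x + y) = q x + q y + B x y := by
    intro x y
    simp only [hB, QuadraticMap.polarBilin_apply_apply, QuadraticMap.polar]
    ring
  have hXle : finrank (ZMod 2) X ≤ finrank (ZMod 2) V := X.finrank_le
  have hXrank : finrank (ZMod 2) X = n := by
    have h1 := LinearMap.BilinForm.finrank_orthogonal hnd X
    rw [← hXlag, hdim] at h1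
    rw [hdim] at hXle
    omega
  -- a complement of X
  obtain ⟨Wc, hWc⟩ := Submodule.exists_isCompl X
  have hWrank : finrank (ZMod 2) Wc = n := by
    have h1 := Submodule.finrank_add_eq_of_isCompl hWc
    rw [hdim, hXrank] at h1
    omega
  have hinfbot : X ⊓ Wc = ⊥ := hWc.disjoint.eq_bot
  -- vanishing of B on X
  have hXzero : ∀ x ∈ X, ∀ u ∈ X, B x u = 0 := by
    intro x hx u hu
    have hx' : x ∈ LinearMap.BilinForm.orthogonal B X := hXlag ▸ hx
    exact hcomm u x ▸ hx' u hu
  have hker : ∀ x ∈ X, (∀ w ∈ Wc, B x w = 0) → x = 0 := by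
    intro x hx h
    apply hnd.1
    intro v
    have hv : v ∈ X ⊔ Wc := by rw [hWc.sup_eq_top]; trivial
    obtain ⟨u, hu, w, hw, rfl⟩ := Submodule.mem_sup.mp hv
    rw [map_add, hXzero x hx u hu, h w hw, add_zero]
  -- ψ : X →ₗ Dual Wc
  set ψ : X →ₗ[ZMod 2] Module.Dual (ZMod 2) Wc :=
    (B.comp X.subtype).compl₂ Wc.subtype with hψ
  have hψapp : ∀ (x : X) (w : Wc), ψ x w = B x.val w.val := by
    intro x w; rfl
  have hψinj : Function.Injective ψ := by
    intro x y hxy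
    have h0 : ψ (x - y) = 0 := by rw [map_sub, hxy, sub_self]
    have h1 : (x - y : X).val = 0 := by
      apply hker _ (x - y).2
      intro w hw
      have h2 := congrFun (congrArg DFunLike.coe h0) ⟨w, hw⟩
      rw [hψapp] at h2
      simpa using h2
    exact sub_eq_zero.mp (Subtype.ext h1)
  have hψbij : Function.Bijective ψ := by
    refine ⟨hψinj, ?_⟩
    have heq : finrank (ZMod 2) X = finrank (ZMod 2) (Module.Dual (ZMod 2) Wc) := by
      rw [Subspace.dual_finrank_eq, hXrank, hWrank]
    exact (LinearMap.injective_iff_surjective_of_finrank_eq_finrank heq).mp hψinj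
  set φ : X ≃ₗ[ZMod 2] Module.Dual (ZMod 2) Wc := LinearEquiv.ofBijective ψ hψbij with hφ
  -- Φ : (Wc →ₗ X) → BilinForm Wc
  set Φ : (Wc →ₗ[ZMod 2] X) → LinearMap.BilinForm (ZMod 2) Wc :=
    fun f => B.compl₁₂ Wc.subtype (X.subtype ∘ₗ f) with hΦ
  have hΦapp : ∀ (f : Wc →ₗ[ZMod 2] X) (y z : Wc), Φ f y z = B y.val (f z).val := by
    intro f y z; rfl
  have hΦinj : Function.Injective Φ := by
    intro f g hfg
    ext z
    have heq : ((f z : V) - (g z : V)) = 0 := by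
      apply hker _ (sub_mem (f z).2 (g z).2)
      intro w hw
      have h1 : Φ f ⟨w, hw⟩ z = Φ g ⟨w, hw⟩ z := by rw [hfg]
      rw [hΦapp, hΦapp] at h1
      rw [map_sub, LinearMap.sub_apply, hcomm ((f z : V)) w, hcomm ((g z : V)) w, h1, sub_self]
    have : f z = g z := Subtype.ext (sub_eq_zero.mp heq)
    exact congrArg Subtype.val this
  have hΦsurj : Function.Surjective Φ := by
    intro β
    refine ⟨φ.symm.toLinearMap ∘ₗ β.flip, ?_⟩
    ext y z
    rw [hΦapp]
    have h2 : ψ ((φ.symm (β.flip z) : X)) = β.flip z := by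
      have : (ψ : X →ₗ[ZMod 2] Module.Dual (ZMod 2) Wc) (φ.symm (β.flip z))
          = φ (φ.symm (β.flip z)) := rfl
      rw [this, LinearEquiv.apply_symm_apply]
    calc B y.val ((φ.symm.toLinearMap ∘ₗ β.flip) z : X).val
        = ψ ((φ.symm (β.flip z) : X)) y := by rw [hcomm]; rfl
      _ = β.flip z y := by rw [h2]
      _ = β y z := rfl
  -- a particular solution f0
  obtain ⟨G, hG⟩ := LinearMap.BilinMap.toQuadraticMap_surjective (q.comp Wc.subtype)
  obtain ⟨f0, hf0⟩ := hΦsurj G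
  have hf0' : ∀ y : Wc, B y.val (f0 y).val = q y.val := by
    intro y
    rw [← hΦapp, hf0]
    have h3 := DFunLike.congr_fun hG y
    rw [LinearMap.BilinMap.toQuadraticMap_apply, QuadraticMap.comp_apply] at h3
    exact h3
  -- the graph construction
  set g : (Wc →ₗ[ZMod 2] X) → (Wc →ₗ[ZMod 2] V) :=
    fun f => Wc.subtype + X.subtype ∘ₗ f with hg
  have hgapp : ∀ (f : Wc →ₗ[ZMod 2] X) (y : Wc), g f y = y.val + (f y).val := by
    intro f y; rfl
  have hginj : ∀ f : Wc →ₗ[ZMod 2] X, Function.Injective (g f) := by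
    intro f y z hyz
    rw [hgapp, hgapp] at hyz
    have hmem : y.val - z.val ∈ X ⊓ Wc := by
      constructor
      · have h5 : y.val - z.val = (f z).val - (f y).val := by
          rw [sub_eq_sub_iff_add_eq_add, hyz]
          abel
        rw [h5]
        exact sub_mem (f z).2 (f y).2
      · exact sub_mem y.2 z.2
    rw [hinfbot, Submodule.mem_bot] at hmem
    exact Subtype.ext (sub_eq_zero.mp hmem)
  have hgrank : ∀ f : Wc →ₗ[ZMod 2] X, finrank (ZMod 2) (LinearMap.range (g f)) = n := by
    intro f
    rw [LinearMap.finrank_range_of_inj (hginj f), hWrank]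
  -- Lagrangian-family finrank fact
  have hlagrank : ∀ Y : Submodule (ZMod 2) V,
      Y = LinearMap.BilinForm.orthogonal B Y → finrank (ZMod 2) Y = n := by
    intro Y hY
    have h1 := LinearMap.BilinForm.finrank_orthogonal hnd Y
    rw [← hY, hdim] at h1
    have h2 : finrank (ZMod 2) Y ≤ finrank (ZMod 2) V := Y.finrank_le
    rw [hdim] at h2
    omega
  -- isotropic subspaces of dim n are Lagrangian
  have hiso : ∀ Y : Submodule (ZMod 2) V, finrank (ZMod 2) Y = n →
      (∀ y ∈ Y, q y = 0) → Y = LinearMap.BilinForm.orthogonal B Y := by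
    intro Y hYrank hYq
    have hle : Y ≤ LinearMap.BilinForm.orthogonal B Y := by
      intro u hu m hm
      have h1 := hqadd m u
      rw [hYq u hu, hYq m hm, hYq (m + u) (add_mem hm hu), add_zero, zero_add] at h1
      exact h1.symm
    apply Submodule.eq_of_le_of_finrank_eq hle
    rw [LinearMap.BilinForm.finrank_orthogonal hnd Y, hdim, hYrank]
    omega
  -- the bijection between Lagrangian complements and suitable maps f
  set T : {f : Wc →ₗ[ZMod 2] X // ∀ y : Wc, q (y.val + (f y).val) = 0} →
      {Y : Submodule (ZMod 2) V //
        (∀ y ∈ Y, q y = 0) ∧ Y = LinearMap.BilinForm.orthogonal B Y ∧ Y ⊓ X = ⊥} := by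
    intro f
    refine ⟨LinearMap.range (g f.1), ?_, ?_, ?_⟩
    · rintro v ⟨y, rfl⟩
      rw [hgapp]
      exact f.2 y
    · apply hiso _ (hgrank f.1)
      rintro v ⟨y, rfl⟩
      rw [hgapp]
      exact f.2 y
    · rw [eq_bot_iff]
      rintro v ⟨⟨y, rfl⟩, hvX⟩
      rw [hgapp] at hvX ⊢
      have hy : y.val ∈ X ⊓ Wc := by
        constructor
        · rw [show y.val = (y.val + (f.1 y).val) - (f.1 y).val by abel]
          exact sub_mem hvX (f.1 y).2
        · exact y.2
      rw [hinfbot, Submodule.mem_bot] at hy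
      have : y = 0 := Subtype.ext hy
      rw [this, Submodule.mem_bot]
      simp
  have hTinj : Function.Injective T := by
    intro f f' hff
    have hYY : LinearMap.range (g f.1) = LinearMap.range (g f'.1) :=
      congrArg Subtype.val hff
    apply Subtype.ext
    apply LinearMap.ext
    intro y
    have hmem : g f.1 y ∈ LinearMap.range (g f'.1) := by
      rw [← hYY]; exact ⟨y, rfl⟩
    obtain ⟨y', hy'⟩ := hmem
    rw [hgapp, hgapp] at hy'
    have h5 : y'.val - y.val ∈ X ⊓ Wc := by
      constructor
      · rw [show y'.val - y.val = (f.1 y).val - (f'.1 y').val by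
          rw [sub_eq_sub_iff_add_eq_add, hy']; abel]
        exact sub_mem (f.1 y).2 (f'.1 y').2
      · exact sub_mem y'.2 y.2
    rw [hinfbot, Submodule.mem_bot, sub_eq_zero] at h5
    have hyy : y' = y := Subtype.ext h5
    subst hyy
    have h6 := add_left_cancel hy'
    exact Subtype.ext h6.symm
  have hTsurj : Function.Surjective T := by
    rintro ⟨Y, hYq, hYlag, hYX⟩
    have hYrank : finrank (ZMod 2) Y = n := hlagrank Y hYlag
    have hdisj : Disjoint X Y := by
      rw [disjoint_iff, inf_comm]
      exact hYX
    have hcodis : Codisjoint X Y := by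
      rw [codisjoint_iff, sup_comm]
      apply Submodule.eq_top_of_finrank_eq
      rw [hdim]
      have h6 := Submodule.finrank_sup_add_finrank_inf_eq Y X
      rw [hYX, finrank_bot, hYrank, hXrank] at h6
      omega
    have hcYX : IsCompl X Y := ⟨hdisj, hcodis⟩
    set pX := X.linearProjOfIsCompl Y hcYX with hpX
    set pY := Y.linearProjOfIsCompl X hcYX.symm with hpY
    have hproj : ∀ v : V, v - (pX v).val ∈ Y := by
      intro v
      have h7 := Submodule.projection_add_projection_eq_self hcYX v
      have h8 : v - (pX v).val = (pY v).val := by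
        rw [sub_eq_iff_eq_add, add_comm]
        exact h7.symm
      rw [h8]
      exact (pY v).2
    obtain ⟨f, hf⟩ : ∃ f : Wc →ₗ[ZMod 2] X, f = -(pX ∘ₗ Wc.subtype) := ⟨_, rfl⟩
    have hfapp : ∀ y : Wc, y.val + (f y).val = y.val - (pX y.val).val := by
      intro y
      rw [hf]
      simp only [LinearMap.neg_apply, LinearMap.comp_apply, Submodule.coe_subtype,
        NegMemClass.coe_neg]
      abel
    have hmemY : ∀ y : Wc, y.val + (f y).val ∈ Y := by
      intro y; rw [hfapp]; exact hproj y.val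
    refine ⟨⟨f, ?_⟩, ?_⟩
    · intro y
      exact hYq _ (hmemY y)
    · apply Subtype.ext
      show LinearMap.range (g f) = Y
      have hle : LinearMap.range (g f) ≤ Y := by
        rintro v ⟨y, rfl⟩
        rw [hgapp]
        exact hmemY y
      exact Submodule.eq_of_le_of_finrank_eq hle (by rw [hgrank, hYrank])
  -- the chain of cardinality identifications
  rw [← Nat.card_congr (Equiv.ofBijective T ⟨hTinj, hTsurj⟩)]
  have e1 : {f : Wc →ₗ[ZMod 2] X // ∀ y : Wc, q (y.val + (f y).val) = 0} ≃
      {f : Wc →ₗ[ZMod 2] X // ∀ y : Wc, B y.val (f y).val = q y.val} := by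
    apply Equiv.subtypeEquiv (Equiv.refl _)
    intro f
    simp only [Equiv.refl_apply]
    constructor
    · intro h y
      have h1 := hqadd y.val (f y).val
      rw [h y, hXq _ (f y).2, add_zero] at h1
      exact ((St5.z2 _ _).1 h1.symm).symm
    · intro h y
      rw [hqadd, hXq _ (f y).2, add_zero, h y]
      exact (St5.z2 (q y.val) (q y.val)).2 rfl
  have e2 : {f : Wc →ₗ[ZMod 2] X // ∀ y : Wc, B y.val (f y).val = q y.val} ≃
      {f : Wc →ₗ[ZMod 2] X // ∀ y : Wc, B y.val (f y).val = 0} :=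
    { toFun := fun f => ⟨f.1 - f0, by
        intro y
        rw [LinearMap.sub_apply, AddSubgroupClass.coe_sub, map_sub, f.2 y, hf0' y, sub_self]⟩
      invFun := fun f => ⟨f.1 + f0, by
        intro y
        rw [LinearMap.add_apply, Submodule.coe_add, map_add, f.2 y, hf0' y, zero_add]⟩
      left_inv := fun f => by
        apply Subtype.ext
        simp only [sub_add_cancel]
      right_inv := fun f => by
        apply Subtype.ext
        simp only [add_sub_cancel_right] }
  have e3 : {f : Wc →ₗ[ZMod 2] X // ∀ y : Wc, B y.val (f y).val = 0} ≃
      {β : LinearMap.BilinForm (ZMod 2) Wc // ∀ y, β y y = 0} := by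
    apply Equiv.subtypeEquiv (Equiv.ofBijective Φ ⟨hΦinj, hΦsurj⟩)
    intro f
    change (∀ y : Wc, B y.val (f y).val = 0) ↔ ∀ y, Φ f y y = 0
    exact forall_congr' fun y => by rw [hΦapp]
  rw [Nat.card_congr ((e1.trans e2).trans e3)]
  exact St5.card_bilin ((Module.finBasis (ZMod 2) Wc).reindex (finCongr hWrank))
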